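/- Let n ≥ 1, 0 < d < n, let Γ ⊂ ℝ^{n+1} be a nonempty closed d-ADR set with constant C₁ ≥ 1, let γ ∈ (n−d−1, n−d+1), let μ := 𝓗^d restricted to Γ, and let m(A) := ∫_A dist(Y, Γ)^{−γ} dY. Define ρ(x,r) := m(B(x,r)) / ( r · μ(Γ ∩ B(x,r)) ) for x ∈ Γ and r > 0. Then there exists C ≥ 1, depending only on n, d, γ and C₁, such that C^{-1} r^{n−d−γ} ≤ ρ(x,r) ≤ C r^{n−d−γ} for all x ∈ Γ and 0 < r < diam(Γ). In particular, setting ε := 1 + d + γ − n > 0, one has ρ(x,r)/ρ(x,s) ≤ C² (r/s)^{1−ε} for all x ∈ Γ and 0 < s ≤ r < diam(Γ). -/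

import Mathlib

open Metric MeasureTheory Set
open scoped ENNReal

noncomputable section

/-- The measure `m(A) = ∫_A dist(Y,Γ)^{-γ} dY`. -/
def distWeightMeasure {n : ℕ} (Γ : Set (EuclideanSpace ℝ (Fin (n + 1)))) (γ : ℝ)
    (A : Set (EuclideanSpace ℝ (Fin (n + 1)))) : ℝ≥0∞ :=
  ∫⁻ Y in A, ENNReal.ofReal (Metric.infDist Y Γ ^ (-γ))

/-- The ratio `ρ(x,r) = m(B(x,r)) / (r μ(Γ ∩ B(x,r)))`, where `μ = 𝓗^d|_Γ`. -/
def rhoRatio {n : ℕ} (Γ : Set (EuclideanSpace ℝ (Fin (n + 1)))) (d γ : ℝ)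
    (x : EuclideanSpace ℝ (Fin (n + 1))) (r : ℝ) : ℝ≥0∞ :=
  distWeightMeasure Γ γ (ball x r) / (ENNReal.ofReal r * μH[d] (Γ ∩ ball x r))

/-- A finite set of centers whose balls of radius `1/4` cover the unit closed ball. -/
lemma auxUnitCover (n : ℕ) :
    ∃ F : Finset (EuclideanSpace ℝ (Fin (n + 1))),
      closedBall (0 : EuclideanSpace ℝ (Fin (n + 1))) 1 ⊆ ⋃ c ∈ F, ball c 4⁻¹ :=
  (isCompact_closedBall (0 : EuclideanSpace ℝ (Fin (n + 1))) 1).elim_finite_subcover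
    (fun c : EuclideanSpace ℝ (Fin (n + 1)) => ball c 4⁻¹) (fun _ => isOpen_ball)
    (fun y _ => mem_iUnion.2 ⟨y, mem_ball_self (by norm_num)⟩)

set_option maxHeartbeats 1600000 in
/-- for a `d`-ADR set `Γ ⊆ ℝ^{n+1}` (`0 < d < n`),
`γ ∈ (n-d-1, n-d+1)`, `μ = 𝓗^d|_Γ` and `m = dist(·,Γ)^{-γ} dY`, the ratio
`ρ(x,r) = m(B(x,r))/(r μ(Γ ∩ B(x,r)))` satisfies `ρ(x,r) ≃ r^{n-d-γ}` for
`x ∈ Γ`, `0 < r < diam Γ`; in particular, with `ε := 1+d+γ-n > 0`,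
`ρ(x,r)/ρ(x,s) ≤ C² (r/s)^{1-ε}` for `0 < s ≤ r < diam Γ`. -/
theorem statement11 (n : ℕ) (hn : 1 ≤ n) (d : ℝ) (hd0 : 0 < d) (hdn : d < n)
    (γ : ℝ) (hγ1 : (n : ℝ) - d - 1 < γ) (hγ2 : γ < (n : ℝ) - d + 1)
    (C₁ : ℝ) (hC₁ : 1 ≤ C₁) :
    ∃ C : ℝ, 1 ≤ C ∧
      ∀ Γ : Set (EuclideanSpace ℝ (Fin (n + 1))), IsClosed Γ → Γ.Nonempty →
        -- Γ is d-ADR with constant C₁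
        (∀ x ∈ Γ, ∀ r : ℝ, 0 < r → ENNReal.ofReal r < EMetric.diam Γ →
          ENNReal.ofReal (C₁⁻¹ * r ^ d) ≤ μH[d] (Γ ∩ ball x r) ∧
            μH[d] (Γ ∩ ball x r) ≤ ENNReal.ofReal (C₁ * r ^ d)) →
        -- C⁻¹ r^{n-d-γ} ≤ ρ(x,r) ≤ C r^{n-d-γ} for x ∈ Γ, 0 < r < diam Γ
        (∀ x ∈ Γ, ∀ r : ℝ, 0 < r → ENNReal.ofReal r < EMetric.diam Γ →
          ENNReal.ofReal (C⁻¹ * r ^ ((n : ℝ) - d - γ)) ≤ rhoRatio Γ d γ x r ∧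
            rhoRatio Γ d γ x r ≤ ENNReal.ofReal (C * r ^ ((n : ℝ) - d - γ))) ∧
        -- in particular, ε := 1+d+γ-n > 0 and ρ(x,r)/ρ(x,s) ≤ C² (r/s)^{1-ε}
        (0 < 1 + d + γ - (n : ℝ)) ∧
        (∀ x ∈ Γ, ∀ r s : ℝ, 0 < s → s ≤ r → ENNReal.ofReal r < EMetric.diam Γ →
          rhoRatio Γ d γ x r / rhoRatio Γ d γ x s ≤
            ENNReal.ofReal (C ^ 2 * (r / s) ^ (1 - (1 + d + γ - (n : ℝ))))) := by
  classical
  obtain ⟨F, hF⟩ := auxUnitCover n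
  have hΩpos : 0 < volume (ball (0 : EuclideanSpace ℝ (Fin (n + 1))) 1) :=
    measure_ball_pos _ _ one_pos
  have hΩfin : volume (ball (0 : EuclideanSpace ℝ (Fin (n + 1))) 1) < ⊤ := measure_ball_lt_top
  set ω : ℝ := (volume (ball (0 : EuclideanSpace ℝ (Fin (n + 1))) 1)).toReal with hω_def
  have hωpos : 0 < ω := ENNReal.toReal_pos hΩpos.ne' hΩfin.ne
  have hΩ : volume (ball (0 : EuclideanSpace ℝ (Fin (n + 1))) 1) = ENNReal.ofReal ω :=
    (ENNReal.ofReal_toReal hΩfin.ne).symm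
  have hvol_ball : ∀ (x : EuclideanSpace ℝ (Fin (n + 1))) (r : ℝ), 0 ≤ r →
      volume (ball x r) = ENNReal.ofReal (ω * r ^ (n + 1)) := by
    intro x r hr
    rw [Measure.addHaar_ball volume x hr, finrank_euclideanSpace_fin, hΩ,
      ← ENNReal.ofReal_mul (by positivity), mul_comm]
  set κ : ℝ := (F.card : ℝ) + 1 with hκ_def
  have hκ : 1 ≤ κ := by
    have : (0:ℝ) ≤ (F.card : ℝ) := Nat.cast_nonneg _
    linarith
  clear_value κ
  set A : ℝ := κ * C₁ ^ 2 * 3 ^ d * 6 ^ (n + 1) * ω with hA_def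
  have hApos : 0 < A := by positivity
  set β : ℝ := (n : ℝ) + 1 - d with hβ_def
  have hβpos : 0 < β := by simp only [hβ_def]; linarith
  set βγ : ℝ := (n : ℝ) + 1 - d - γ with hβγ_def
  have hβγpos : 0 < βγ := by simp only [hβγ_def]; linarith
  set q : ℝ := 2 ^ (-βγ) with hq_def
  have hq0 : 0 < q := Real.rpow_pos_of_pos two_pos _
  have hq1 : q < 1 := Real.rpow_lt_one_of_one_lt_of_neg one_lt_two (by linarith)
  set c : ℝ := min 1 ((ω / (2 * A)) ^ β⁻¹) with hc_def
  have hcpos : 0 < c := lt_min one_pos (Real.rpow_pos_of_pos (by positivity) _)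
  have hc1 : c ≤ 1 := min_le_left _ _
  have hcb : A * c ^ β ≤ ω / 2 := by
    have h1 : c ^ β ≤ ((ω / (2 * A)) ^ β⁻¹) ^ β :=
      Real.rpow_le_rpow hcpos.le (min_le_right _ _) hβpos.le
    have h2 : ((ω / (2 * A)) ^ β⁻¹) ^ β = ω / (2 * A) := by
      rw [← Real.rpow_mul (by positivity), inv_mul_cancel₀ hβpos.ne', Real.rpow_one]
    rw [h2] at h1
    have h3 : A * c ^ β ≤ A * (ω / (2 * A)) :=
      mul_le_mul_of_nonneg_left h1 hApos.le
    have h4 : A * (ω / (2 * A)) = ω / 2 := by field_simp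
    linarith
  set cm : ℝ := min 1 (c ^ (-γ)) with hcm_def
  have hcm0 : 0 < cm := lt_min one_pos (Real.rpow_pos_of_pos hcpos _)
  have hcm1 : cm ≤ 1 := min_le_left _ _
  set clow : ℝ := cm * (ω / 2) with hclow_def
  have hclowpos : 0 < clow := by positivity
  set Cup : ℝ := ω + A * 2 ^ γ * (1 - q)⁻¹ with hCup_def
  have hCuppos : 0 < Cup := by
    have h2γ : (0:ℝ) < (2:ℝ) ^ γ := Real.rpow_pos_of_pos two_pos _
    have : (0:ℝ) < (1 - q)⁻¹ := by
      apply inv_pos.2; linarith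
    positivity
  set C : ℝ := max 1 (max (C₁ * Cup) (C₁ / clow)) with hC_def
  have hC1 : 1 ≤ C := le_max_left _ _
  have hCpos : 0 < C := lt_of_lt_of_le one_pos hC1
  have hCa : C₁ * Cup ≤ C := le_trans (le_max_left _ _) (le_max_right _ _)
  have hCb : C₁ / clow ≤ C := le_trans (le_max_right _ _) (le_max_right _ _)
  refine ⟨C, hC1, ?_⟩
  intro Γ hΓc hΓne hADR
  haveI : NullSingletonClass (μH[d] : Measure (EuclideanSpace ℝ (Fin (n + 1)))) :=
    MeasureTheory.Measure.noAtoms_hausdorff _ hd0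
  -- Step 1: global upper regularity at all scales
  have hM : ∀ x ∈ Γ, ∀ R : ℝ, 0 < R →
      μH[d] (Γ ∩ ball x R) ≤ ENNReal.ofReal (κ * C₁ * R ^ d) := by
    intro x hx R hR
    have hRd : (0:ℝ) < R ^ d := Real.rpow_pos_of_pos hR d
    by_cases hcase : ENNReal.ofReal R < EMetric.diam Γ
    · refine (hADR x hx R hR hcase).2.trans (ENNReal.ofReal_le_ofReal ?_)
      nlinarith [mul_nonneg (mul_nonneg (by linarith : (0:ℝ) ≤ κ - 1)
        (by linarith : (0:ℝ) ≤ C₁)) hRd.le]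
    · push_neg at hcase
      have hDfin : EMetric.diam Γ ≠ ⊤ := (lt_of_le_of_lt hcase ENNReal.ofReal_lt_top).ne
      rcases eq_or_ne (EMetric.diam Γ) 0 with hD0 | hD0
      · have hsub : (Γ ∩ ball x R).Subsingleton :=
          (EMetric.diam_eq_zero_iff.1 hD0).anti inter_subset_left
        rw [hsub.measure_zero]
        exact zero_le
      · set Dr := (EMetric.diam Γ).toReal with hDr_def
        have hDrpos : 0 < Dr := ENNReal.toReal_pos hD0 hDfin
        have hDrR : Dr ≤ R := by
          have h := ENNReal.toReal_mono ENNReal.ofReal_ne_top hcase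
          rwa [ENNReal.toReal_ofReal hR.le] at h
        have hdiam_eq : EMetric.diam Γ = ENNReal.ofReal Dr := (ENNReal.ofReal_toReal hDfin).symm
        have hcover : Γ ⊆ ⋃ p ∈ F, ball (x + Dr • p) (Dr / 4) := by
          intro y hy
          have hyx : dist y x ≤ Dr := by
            rw [dist_edist]
            exact ENNReal.toReal_mono hDfin (EMetric.edist_le_diam_of_mem hy hx)
          have hv : Dr⁻¹ • (y - x) ∈ closedBall (0 : EuclideanSpace ℝ (Fin (n + 1))) 1 := by
            rw [mem_closedBall, dist_zero_right, norm_smul, norm_inv, Real.norm_eq_abs,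
              abs_of_pos hDrpos, ← dist_eq_norm]
            calc Dr⁻¹ * dist y x ≤ Dr⁻¹ * Dr := by
                  exact mul_le_mul_of_nonneg_left hyx (inv_nonneg.2 hDrpos.le)
              _ = 1 := inv_mul_cancel₀ hDrpos.ne'
          obtain ⟨p, hpF, hp⟩ := mem_iUnion₂.1 (hF hv)
          refine mem_iUnion₂.2 ⟨p, hpF, ?_⟩
          rw [mem_ball] at hp ⊢
          have hvec : y - (x + Dr • p) = Dr • (Dr⁻¹ • (y - x) - p) := by
            rw [smul_sub, smul_smul, mul_inv_cancel₀ hDrpos.ne', one_smul]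
            abel
          have hdd : dist y (x + Dr • p) = Dr * dist (Dr⁻¹ • (y - x)) p := by
            rw [dist_eq_norm, dist_eq_norm, hvec, norm_smul, Real.norm_eq_abs,
              abs_of_pos hDrpos]
          rw [hdd]
          calc Dr * dist (Dr⁻¹ • (y - x)) p < Dr * 4⁻¹ :=
                mul_lt_mul_of_pos_left hp hDrpos
            _ = Dr / 4 := by ring
        have hterm : ∀ p ∈ F, μH[d] (Γ ∩ ball (x + Dr • p) (Dr / 4))
            ≤ ENNReal.ofReal (C₁ * (Dr / 2) ^ d) := by
          intro p _
          rcases (Γ ∩ ball (x + Dr • p) (Dr / 4)).eq_empty_or_nonempty with he | hne'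
          · rw [he, measure_empty]; exact zero_le
          · obtain ⟨z, hzΓ, hzb⟩ := hne'
            have hzsub : Γ ∩ ball (x + Dr • p) (Dr / 4) ⊆ Γ ∩ ball z (Dr / 2) := by
              rintro w ⟨hwΓ, hwb⟩
              refine ⟨hwΓ, ?_⟩
              rw [mem_ball] at hzb hwb ⊢
              have ht := dist_triangle w (x + Dr • p) z
              have hcomm : dist (x + Dr • p) z = dist z (x + Dr • p) := dist_comm _ _
              linarith
            refine (measure_mono hzsub).trans ?_
            refine (hADR z hzΓ (Dr / 2) (by linarith) ?_).2
            rw [hdiam_eq]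
            exact (ENNReal.ofReal_lt_ofReal_iff hDrpos).2 (by linarith)
        calc μH[d] (Γ ∩ ball x R) ≤ μH[d] (⋃ p ∈ F, Γ ∩ ball (x + Dr • p) (Dr / 4)) := by
              refine measure_mono ?_
              intro y hy
              obtain ⟨p, hpF, hp⟩ := mem_iUnion₂.1 (hcover hy.1)
              exact mem_iUnion₂.2 ⟨p, hpF, hy.1, hp⟩
          _ ≤ ∑ p ∈ F, μH[d] (Γ ∩ ball (x + Dr • p) (Dr / 4)) := measure_biUnion_finset_le F _
          _ ≤ ∑ p ∈ F, ENNReal.ofReal (C₁ * (Dr / 2) ^ d) := Finset.sum_le_sum hterm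
          _ = (F.card : ℝ≥0∞) * ENNReal.ofReal (C₁ * (Dr / 2) ^ d) := by
              rw [Finset.sum_const, nsmul_eq_mul]
          _ ≤ ENNReal.ofReal (κ * C₁ * R ^ d) := by
              rw [← ENNReal.ofReal_natCast (F.card), ← ENNReal.ofReal_mul (Nat.cast_nonneg _)]
              apply ENNReal.ofReal_le_ofReal
              have hdle : (Dr / 2) ^ d ≤ R ^ d :=
                Real.rpow_le_rpow (by linarith) (by linarith) hd0.le
              have hcard : (F.card : ℝ) ≤ κ := by
                rw [hκ_def]; linarith
              have hpow : (0:ℝ) < (Dr / 2) ^ d := Real.rpow_pos_of_pos (by linarith) d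
              have hfin := mul_le_mul hcard
                (mul_le_mul_of_nonneg_left hdle (by linarith : (0:ℝ) ≤ C₁))
                (by positivity) (by linarith : (0:ℝ) ≤ κ)
              nlinarith [hfin]
  -- Step 2: volume of t-neighborhood of Γ inside a ball
  have hN : ∀ x ∈ Γ, ∀ r t : ℝ, 0 < t → t ≤ r → ENNReal.ofReal r < EMetric.diam Γ →
      volume (ball x r ∩ {Y | infDist Y Γ < t}) ≤ ENNReal.ofReal (A * t ^ β * r ^ d) := by
    intro x hx r t ht htr hrD
    have hr : 0 < r := ht.trans_le htr
    obtain ⟨T, hTK, hTdisj, hTcov⟩ :=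
      Vitali.exists_disjoint_subfamily_covering_enlargement_closedBall
        (Γ ∩ closedBall x (2 * r)) id (fun _ => t) t (fun _ _ => le_rfl) 4 (by norm_num)
    have hTΓ : T ⊆ Γ := hTK.trans inter_subset_left
    have hTc : T.Countable := by
      refine hTdisj.countable_of_nonempty_interior fun b _ => ?_
      simp only [id]
      rw [interior_closedBall b ht.ne']
      exact nonempty_ball.2 ht
    have hcov : ball x r ∩ {Y | infDist Y Γ < t} ⊆ ⋃ b ∈ T, ball b (6 * t) := by
      rintro Y ⟨hYb, hYt⟩
      obtain ⟨p, hpΓ, hpd⟩ := (infDist_lt_iff hΓne).1 hYt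
      have hpK : p ∈ Γ ∩ closedBall x (2 * r) := by
        refine ⟨hpΓ, ?_⟩
        rw [mem_closedBall]
        have h1 := mem_ball.1 hYb
        have h2 := dist_triangle p Y x
        have h3 : dist p Y = dist Y p := dist_comm _ _
        linarith
      obtain ⟨b, hbT, hbsub⟩ := hTcov p hpK
      have hpb : dist p b ≤ 4 * t := by
        have hself : p ∈ closedBall (id p) ((fun _ => t) p) := mem_closedBall_self ht.le
        simpa using hbsub hself
      refine mem_iUnion₂.2 ⟨b, hbT, ?_⟩
      rw [mem_ball]
      calc dist Y b ≤ dist Y p + dist p b := dist_triangle _ _ _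
        _ < 6 * t := by linarith
    set c₀ : ℝ≥0∞ := ENNReal.ofReal (C₁⁻¹ * t ^ d) with hc₀_def
    have hc₀0 : c₀ ≠ 0 := (ENNReal.ofReal_pos.2 (by positivity)).ne'
    have hc₀top : c₀ ≠ ⊤ := ENNReal.ofReal_ne_top
    set M : ℝ≥0∞ := ENNReal.ofReal (κ * C₁ * (3 * r) ^ d) with hM_def
    have hμlower : ∀ b ∈ T, c₀ ≤ μH[d] (Γ ∩ ball b t) := fun b hb =>
      (hADR b (hTΓ hb) t ht ((ENNReal.ofReal_le_ofReal htr).trans_lt hrD)).1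
    have hdisj2 : T.PairwiseDisjoint (fun b => Γ ∩ ball b t) := by
      refine hTdisj.mono ?_
      intro b
      exact inter_subset_right.trans ball_subset_closedBall
    have hUnion : μH[d] (⋃ b ∈ T, Γ ∩ ball b t) = ∑' b : T, μH[d] (Γ ∩ ball (b : _) t) :=
      measure_biUnion hTc hdisj2 fun b _ => hΓc.measurableSet.inter measurableSet_ball
    have hUsub : (⋃ b ∈ T, Γ ∩ ball b t) ⊆ Γ ∩ ball x (3 * r) := by
      rintro z hz
      obtain ⟨b, hb, hzΓ, hzb⟩ := mem_iUnion₂.1 hz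
      refine ⟨hzΓ, ?_⟩
      rw [mem_ball] at hzb ⊢
      have hbx : dist b x ≤ 2 * r := mem_closedBall.1 (hTK hb).2
      have h2 := dist_triangle z b x
      linarith
    set S : ℝ≥0∞ := ∑' _ : T, (1 : ℝ≥0∞) with hS_def
    have hS : c₀ * S ≤ M := by
      have h1 : c₀ * S = ∑' b : T, c₀ := by
        rw [hS_def, ← ENNReal.tsum_mul_left]
        simp
      calc c₀ * S = ∑' b : T, c₀ := h1
        _ ≤ ∑' b : T, μH[d] (Γ ∩ ball (b : _) t) := ENNReal.tsum_le_tsum fun b => hμlower b b.2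
        _ = μH[d] (⋃ b ∈ T, Γ ∩ ball b t) := hUnion.symm
        _ ≤ μH[d] (Γ ∩ ball x (3 * r)) := measure_mono hUsub
        _ ≤ M := hM x hx (3 * r) (by linarith)
    have hSle : S ≤ M / c₀ :=
      (ENNReal.le_div_iff_mul_le (Or.inl hc₀0) (Or.inl hc₀top)).2 (by rwa [mul_comm])
    have hVb : ∀ b : EuclideanSpace ℝ (Fin (n + 1)),
        volume (ball b (6 * t)) = ENNReal.ofReal (ω * (6 * t) ^ (n + 1)) :=
      fun b => hvol_ball b (6 * t) (by positivity)
    calc volume (ball x r ∩ {Y | infDist Y Γ < t})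
        ≤ volume (⋃ b ∈ T, ball (b : _) (6 * t)) := measure_mono hcov
      _ ≤ ∑' b : T, volume (ball (b : EuclideanSpace ℝ (Fin (n + 1))) (6 * t)) :=
          measure_biUnion_le volume hTc _
      _ = ∑' _ : T, ENNReal.ofReal (ω * (6 * t) ^ (n + 1)) := tsum_congr fun b => hVb b
      _ = S * ENNReal.ofReal (ω * (6 * t) ^ (n + 1)) := by
          rw [hS_def, ← ENNReal.tsum_mul_right]
          simp
      _ ≤ (M / c₀) * ENNReal.ofReal (ω * (6 * t) ^ (n + 1)) := mul_le_mul_left hSle _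
      _ ≤ ENNReal.ofReal (A * t ^ β * r ^ d) := by
          rw [hM_def, hc₀_def, ← ENNReal.ofReal_div_of_pos (by positivity),
            ← ENNReal.ofReal_mul (by positivity)]
          apply ENNReal.ofReal_le_ofReal
          rw [div_mul_eq_mul_div, div_le_iff₀ (by positivity : (0:ℝ) < C₁⁻¹ * t ^ d)]
          -- real inequality:
          -- κ C₁ (3r)^d ((6t)^{n+1} ω) ≤ A t^β r^d (C₁⁻¹ t^d)
          have h3r : (3 * r) ^ d = 3 ^ d * r ^ d := Real.mul_rpow (by norm_num) hr.le
          have h6t : ((6 : ℝ) * t) ^ (n + 1) = 6 ^ (n + 1) * t ^ (n + 1) := mul_pow 6 t (n + 1)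
          have htβ : t ^ β * t ^ d = t ^ (n + 1 : ℕ) := by
            rw [← Real.rpow_add ht, hβ_def, ← Real.rpow_natCast t (n + 1)]
            congr 1
            push_cast
            ring
          have hC₁pos : (0:ℝ) < C₁ := lt_of_lt_of_le one_pos hC₁
          rw [hA_def]
          have hexpand : κ * C₁ ^ 2 * 3 ^ d * 6 ^ (n + 1) * ω * (t ^ β) * r ^ d * (C₁⁻¹ * t ^ d)
              = κ * C₁ * (3 ^ d * r ^ d) * (ω * (6 ^ (n + 1) * t ^ (n + 1)))
              * (C₁ * C₁⁻¹) := by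
            rw [← htβ]
            ring
          rw [h3r, h6t]
          calc κ * C₁ * (3 ^ d * r ^ d) * (ω * (6 ^ (n + 1) * t ^ (n + 1)))
              = κ * C₁ * (3 ^ d * r ^ d) * (ω * (6 ^ (n + 1) * t ^ (n + 1)))
                * (C₁ * C₁⁻¹) := by rw [mul_inv_cancel₀ hC₁pos.ne', mul_one]
            _ = κ * C₁ ^ 2 * 3 ^ d * 6 ^ (n + 1) * ω * (t ^ β) * r ^ d * (C₁⁻¹ * t ^ d) := by
                rw [hexpand]
            _ ≤ κ * C₁ ^ 2 * 3 ^ d * 6 ^ (n + 1) * ω * t ^ β * r ^ d * (C₁⁻¹ * t ^ d) :=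
                le_refl _
  -- Step 3: lower bound on m(B(x,r))
  have hmlow : ∀ x ∈ Γ, ∀ r : ℝ, 0 < r → ENNReal.ofReal r < EMetric.diam Γ →
      ENNReal.ofReal (clow * r ^ ((n : ℝ) + 1 - γ)) ≤ distWeightMeasure Γ γ (ball x r) := by
    intro x hx r hr hrD
    set G : Set (EuclideanSpace ℝ (Fin (n + 1))) :=
      ball x r ∩ {Y | c * r ≤ infDist Y Γ} with hG_def
    have hGmeas : MeasurableSet G :=
      measurableSet_ball.inter
        (isClosed_le continuous_const (continuous_infDist_pt Γ)).measurableSet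
    have hsplit : ball x r ⊆ G ∪ (ball x r ∩ {Y | infDist Y Γ < c * r}) := by
      intro Y hY
      by_cases h : c * r ≤ infDist Y Γ
      · exact Or.inl ⟨hY, h⟩
      · exact Or.inr ⟨hY, lt_of_not_ge h⟩
    have hsmall : volume (ball x r ∩ {Y | infDist Y Γ < c * r})
        ≤ ENNReal.ofReal (ω / 2 * r ^ (n + 1)) := by
      refine (hN x hx r (c * r) (by positivity) (by nlinarith) hrD).trans
        (ENNReal.ofReal_le_ofReal ?_)
      have h1 : (c * r) ^ β = c ^ β * r ^ β := Real.mul_rpow hcpos.le hr.le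
      have h2 : r ^ β * r ^ d = r ^ (n + 1 : ℕ) := by
        rw [← Real.rpow_add hr, hβ_def, ← Real.rpow_natCast r (n + 1)]
        congr 1
        push_cast
        ring
      have h3 : (0:ℝ) < r ^ β * r ^ d := by positivity
      calc A * (c * r) ^ β * r ^ d = (A * c ^ β) * (r ^ β * r ^ d) := by rw [h1]; ring
        _ ≤ (ω / 2) * (r ^ β * r ^ d) := mul_le_mul_of_nonneg_right hcb h3.le
        _ = ω / 2 * r ^ (n + 1) := by rw [h2]
    have hvolG : ENNReal.ofReal (ω / 2 * r ^ (n + 1)) ≤ volume G := by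
      have h1 : volume (ball x r) ≤ volume G + volume (ball x r ∩ {Y | infDist Y Γ < c * r}) :=
        (measure_mono hsplit).trans (measure_union_le _ _)
      rw [hvol_ball x r hr.le] at h1
      have h2 : ENNReal.ofReal (ω * r ^ (n + 1))
          = ENNReal.ofReal (ω / 2 * r ^ (n + 1)) + ENNReal.ofReal (ω / 2 * r ^ (n + 1)) := by
        rw [← ENNReal.ofReal_add (by positivity) (by positivity)]
        congr 1
        ring
      rw [h2] at h1
      have h3 : ENNReal.ofReal (ω / 2 * r ^ (n + 1)) + ENNReal.ofReal (ω / 2 * r ^ (n + 1))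
          ≤ volume G + ENNReal.ofReal (ω / 2 * r ^ (n + 1)) :=
        h1.trans (add_le_add_right hsmall _)
      exact (ENNReal.add_le_add_iff_right ENNReal.ofReal_ne_top).1 h3
    have hpt : ∀ Y ∈ G, ENNReal.ofReal (cm * r ^ (-γ))
        ≤ ENNReal.ofReal (infDist Y Γ ^ (-γ)) := by
      rintro Y ⟨hY1, hY2⟩
      apply ENNReal.ofReal_le_ofReal
      have hd1 : c * r ≤ infDist Y Γ := hY2
      have hd2 : infDist Y Γ ≤ r := (infDist_le_dist_of_mem hx).trans (mem_ball.1 hY1).le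
      have hcr : (0:ℝ) < c * r := by positivity
      have hrγ : (0:ℝ) < r ^ (-γ) := Real.rpow_pos_of_pos hr _
      rcases le_or_gt 0 γ with hγ | hγ
      · have h := Real.rpow_le_rpow_of_nonpos (lt_of_lt_of_le hcr hd1) hd2
          (neg_nonpos.2 hγ)
        nlinarith [hcm1, hcm0]
      · have h1 := Real.rpow_le_rpow hcr.le hd1 (by linarith : (0:ℝ) ≤ -γ)
        rw [Real.mul_rpow hcpos.le hr.le] at h1
        have h2 : cm ≤ c ^ (-γ) := min_le_right _ _
        nlinarith [Real.rpow_pos_of_pos hcpos (-γ)]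
    calc ENNReal.ofReal (clow * r ^ ((n : ℝ) + 1 - γ))
        = ENNReal.ofReal (cm * r ^ (-γ)) * ENNReal.ofReal (ω / 2 * r ^ (n + 1)) := by
          rw [← ENNReal.ofReal_mul (by positivity)]
          congr 1
          have h1 : r ^ ((n : ℝ) + 1 - γ) = r ^ (-γ) * r ^ (n + 1 : ℕ) := by
            rw [← Real.rpow_natCast r (n + 1), ← Real.rpow_add hr]
            congr 1
            push_cast
            ring
          rw [hclow_def, h1]
          ring
      _ ≤ ENNReal.ofReal (cm * r ^ (-γ)) * volume G := mul_le_mul_right hvolG _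
      _ = ∫⁻ _ in G, ENNReal.ofReal (cm * r ^ (-γ)) := (setLIntegral_const _ _).symm
      _ ≤ ∫⁻ Y in G, ENNReal.ofReal (infDist Y Γ ^ (-γ)) := setLIntegral_mono' hGmeas hpt
      _ ≤ distWeightMeasure Γ γ (ball x r) := lintegral_mono_set inter_subset_left
  -- Step 4: upper bound on m(B(x,r))
  have hmup : ∀ x ∈ Γ, ∀ r : ℝ, 0 < r → ENNReal.ofReal r < EMetric.diam Γ →
      distWeightMeasure Γ γ (ball x r) ≤ ENNReal.ofReal (Cup * r ^ ((n : ℝ) + 1 - γ)) := by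
    intro x hx r hr hrD
    have h2γ : (0:ℝ) < (2:ℝ) ^ γ := Real.rpow_pos_of_pos two_pos _
    have hq1' : (0:ℝ) < (1 - q)⁻¹ := inv_pos.2 (by linarith)
    have hrE : (0:ℝ) < r ^ ((n : ℝ) + 1 - γ) := Real.rpow_pos_of_pos hr _
    rcases le_or_gt γ 0 with hγ | hγ
    · -- γ ≤ 0 : the integrand is bounded by r^{-γ} on the ball
      have hpt : ∀ Y ∈ ball x r,
          ENNReal.ofReal (infDist Y Γ ^ (-γ)) ≤ ENNReal.ofReal (r ^ (-γ)) := by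
        intro Y hY
        apply ENNReal.ofReal_le_ofReal
        exact Real.rpow_le_rpow infDist_nonneg
          ((infDist_le_dist_of_mem hx).trans (mem_ball.1 hY).le) (by linarith)
      calc distWeightMeasure Γ γ (ball x r)
          ≤ ∫⁻ _ in ball x r, ENNReal.ofReal (r ^ (-γ)) :=
            setLIntegral_mono' measurableSet_ball hpt
        _ = ENNReal.ofReal (r ^ (-γ)) * volume (ball x r) := setLIntegral_const _ _
        _ = ENNReal.ofReal (r ^ (-γ) * (ω * r ^ (n + 1))) := by
            rw [hvol_ball x r hr.le, ← ENNReal.ofReal_mul (by positivity)]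
        _ ≤ ENNReal.ofReal (Cup * r ^ ((n : ℝ) + 1 - γ)) := by
            apply ENNReal.ofReal_le_ofReal
            have h1 : r ^ (-γ) * r ^ (n + 1 : ℕ) = r ^ ((n : ℝ) + 1 - γ) := by
              rw [← Real.rpow_natCast r (n + 1), ← Real.rpow_add hr]
              congr 1
              push_cast
              ring
            calc r ^ (-γ) * (ω * r ^ (n + 1)) = ω * (r ^ (-γ) * r ^ (n + 1 : ℕ)) := by ring
              _ = ω * r ^ ((n : ℝ) + 1 - γ) := by rw [h1]
              _ ≤ Cup * r ^ ((n : ℝ) + 1 - γ) := by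
                  rw [hCup_def]
                  nlinarith [mul_pos (mul_pos hApos h2γ) hq1']
    · -- γ > 0 : dyadic annuli
      have hzero : ∫⁻ Y in ball x r ∩ Γ, ENNReal.ofReal (infDist Y Γ ^ (-γ)) = 0 := by
        have hb : ∀ Y ∈ ball x r ∩ Γ,
            ENNReal.ofReal (infDist Y Γ ^ (-γ)) ≤ (0:ℝ≥0∞) := by
          intro Y hY
          rw [infDist_zero_of_mem hY.2, Real.zero_rpow (by linarith : -γ ≠ 0)]
          simp
        rw [← nonpos_iff_eq_zero]
        calc ∫⁻ Y in ball x r ∩ Γ, ENNReal.ofReal (infDist Y Γ ^ (-γ))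
            ≤ ∫⁻ _ in ball x r ∩ Γ, (0:ℝ≥0∞) :=
              setLIntegral_mono' (measurableSet_ball.inter hΓc.measurableSet) hb
          _ = 0 := by simp
      set Ak : ℕ → Set (EuclideanSpace ℝ (Fin (n + 1))) := fun k =>
        ball x r ∩ {Y | 2 ^ (-(k:ℝ) - 1) * r ≤ infDist Y Γ ∧ infDist Y Γ < 2 ^ (-(k:ℝ)) * r}
        with hAk_def
      have hAk_mem : ∀ (k : ℕ) (Y : EuclideanSpace ℝ (Fin (n + 1))),
          Y ∈ Ak k ↔ Y ∈ ball x r ∧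
            (2 ^ (-(k:ℝ) - 1) * r ≤ infDist Y Γ ∧ infDist Y Γ < 2 ^ (-(k:ℝ)) * r) :=
        fun k Y => Iff.rfl
      have hAcov : ball x r \ Γ ⊆ ⋃ k, Ak k := by
        rintro Y ⟨hYb, hYΓ⟩
        have hds : 0 < infDist Y Γ := by
          have h0 : infDist Y Γ ≠ 0 := by
            intro h
            apply hYΓ
            rw [← hΓc.closure_eq]
            exact (mem_closure_iff_infDist_zero hΓne).2 h
          exact lt_of_le_of_ne infDist_nonneg (Ne.symm h0)
        have hdr : infDist Y Γ < r := lt_of_le_of_lt (infDist_le_dist_of_mem hx) (mem_ball.1 hYb)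
        have hex : ∃ k : ℕ, 2 ^ (-(k:ℝ) - 1) * r ≤ infDist Y Γ := by
          obtain ⟨k, hk⟩ := exists_pow_lt_of_lt_one (div_pos hds hr)
            (by norm_num : (1:ℝ)/2 < 1)
          refine ⟨k, ?_⟩
          have hconv : (2:ℝ) ^ (-(k:ℝ)) = ((1:ℝ)/2) ^ k := by
            rw [one_div, inv_pow, ← Real.rpow_natCast (2:ℝ) k,
              ← Real.rpow_neg (by norm_num : (0:ℝ) ≤ 2)]
          have hk' : ((1:ℝ)/2) ^ k * r < infDist Y Γ := (lt_div_iff₀ hr).1 hk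
          have hmono : (2:ℝ) ^ (-(k:ℝ) - 1) ≤ (2:ℝ) ^ (-(k:ℝ)) :=
            Real.rpow_le_rpow_of_exponent_le one_le_two (by linarith)
          nlinarith [hconv ▸ hmono]
        set K := Nat.find hex with hK_def
        have hupper : infDist Y Γ < 2 ^ (-(K:ℝ)) * r := by
          rcases Nat.eq_zero_or_pos K with h0 | h0
          · rw [h0]
            simpa using hdr
          · obtain ⟨k', hk'⟩ : ∃ k', K = k' + 1 := ⟨K - 1, (Nat.succ_pred_eq_of_pos h0).symm⟩
            have hmin := Nat.find_min hex (show k' < K by omega)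
            push_neg at hmin
            rw [hk']
            have hcast : -((k' + 1 : ℕ) : ℝ) = -(k':ℝ) - 1 := by push_cast; ring
            rw [hcast]
            exact hmin
        exact mem_iUnion.2 ⟨K, (hAk_mem K Y).2 ⟨hYb, Nat.find_spec hex, hupper⟩⟩
      have hAk : ∀ k : ℕ, (∫⁻ Y in Ak k, ENNReal.ofReal (infDist Y Γ ^ (-γ)))
          ≤ ENNReal.ofReal (A * 2 ^ γ * r ^ ((n:ℝ) + 1 - γ)) * ENNReal.ofReal q ^ k := by
        intro k
        have h2k : (0:ℝ) < 2 ^ (-(k:ℝ)) := Real.rpow_pos_of_pos two_pos _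
        have h2k1 : (0:ℝ) < 2 ^ (-(k:ℝ) - 1) := Real.rpow_pos_of_pos two_pos _
        have h2kle : (2:ℝ) ^ (-(k:ℝ)) ≤ 1 :=
          Real.rpow_le_one_of_one_le_of_nonpos one_le_two (neg_nonpos.2 (Nat.cast_nonneg k))
        have htk : (0:ℝ) < 2 ^ (-(k:ℝ)) * r := by positivity
        have htkr : 2 ^ (-(k:ℝ)) * r ≤ r := by nlinarith
        have hmeasAk : MeasurableSet (Ak k) :=
          measurableSet_ball.inter ((continuous_infDist_pt Γ).measurable measurableSet_Ico)
        have hsub : Ak k ⊆ ball x r ∩ {Y | infDist Y Γ < 2 ^ (-(k:ℝ)) * r} := fun Y hY =>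
          ⟨((hAk_mem k Y).1 hY).1, ((hAk_mem k Y).1 hY).2.2⟩
        have hvolAk := (measure_mono hsub).trans (hN x hx r (2 ^ (-(k:ℝ)) * r) htk htkr hrD)
        have hbnd : ∀ Y ∈ Ak k, ENNReal.ofReal (infDist Y Γ ^ (-γ))
            ≤ ENNReal.ofReal ((2 ^ (-(k:ℝ) - 1) * r) ^ (-γ)) := fun Y hY =>
          ENNReal.ofReal_le_ofReal
            (Real.rpow_le_rpow_of_nonpos (by positivity) ((hAk_mem k Y).1 hY).2.1
              (by linarith))
        calc (∫⁻ Y in Ak k, ENNReal.ofReal (infDist Y Γ ^ (-γ)))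
            ≤ ∫⁻ _ in Ak k, ENNReal.ofReal ((2 ^ (-(k:ℝ) - 1) * r) ^ (-γ)) :=
              setLIntegral_mono' hmeasAk hbnd
          _ = ENNReal.ofReal ((2 ^ (-(k:ℝ) - 1) * r) ^ (-γ)) * volume (Ak k) :=
              setLIntegral_const _ _
          _ ≤ ENNReal.ofReal ((2 ^ (-(k:ℝ) - 1) * r) ^ (-γ))
              * ENNReal.ofReal (A * (2 ^ (-(k:ℝ)) * r) ^ β * r ^ d) :=
              mul_le_mul_right hvolAk _
          _ ≤ ENNReal.ofReal (A * 2 ^ γ * r ^ ((n:ℝ) + 1 - γ)) * ENNReal.ofReal q ^ k := by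
              rw [← ENNReal.ofReal_mul (by positivity), ← ENNReal.ofReal_pow hq0.le,
                ← ENNReal.ofReal_mul (by positivity)]
              apply ENNReal.ofReal_le_ofReal
              have hme1 : ((2:ℝ) ^ (-(k:ℝ) - 1) * r) ^ (-γ)
                  = (2:ℝ) ^ ((-(k:ℝ) - 1) * (-γ)) * r ^ (-γ) := by
                rw [Real.mul_rpow h2k1.le hr.le, Real.rpow_mul (by norm_num : (0:ℝ) ≤ 2)]
              have hme2 : ((2:ℝ) ^ (-(k:ℝ)) * r) ^ β
                  = (2:ℝ) ^ (-(k:ℝ) * β) * r ^ β := by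
                rw [Real.mul_rpow h2k.le hr.le, Real.rpow_mul (by norm_num : (0:ℝ) ≤ 2)]
              have hme3 : q ^ k = (2:ℝ) ^ (-βγ * (k:ℝ)) := by
                rw [hq_def, Real.rpow_mul (by norm_num : (0:ℝ) ≤ 2), Real.rpow_natCast]
              have hme4 : r ^ (-γ) * (r ^ β * r ^ d) = r ^ ((n:ℝ) + 1 - γ) := by
                rw [← Real.rpow_add hr, ← Real.rpow_add hr]
                congr 1
                rw [hβ_def]
                ring
              have hme5 : (2:ℝ) ^ ((-(k:ℝ) - 1) * (-γ)) * (2:ℝ) ^ (-(k:ℝ) * β)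
                  = (2:ℝ) ^ γ * (2:ℝ) ^ (-βγ * (k:ℝ)) := by
                rw [← Real.rpow_add two_pos, ← Real.rpow_add two_pos]
                congr 1
                rw [hβγ_def, hβ_def]
                ring
              calc (2 ^ (-(k:ℝ) - 1) * r) ^ (-γ) * (A * (2 ^ (-(k:ℝ)) * r) ^ β * r ^ d)
                  = A * ((2:ℝ) ^ ((-(k:ℝ) - 1) * (-γ)) * 2 ^ (-(k:ℝ) * β))
                    * (r ^ (-γ) * (r ^ β * r ^ d)) := by
                    rw [hme1, hme2]
                    ring
                _ = A * 2 ^ γ * r ^ ((n:ℝ) + 1 - γ) * q ^ k := by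
                    rw [hme5, hme4, hme3]
                    ring
                _ ≤ A * 2 ^ γ * r ^ ((n:ℝ) + 1 - γ) * q ^ k := le_refl _
      have hsplit2 : ball x r ⊆ (ball x r ∩ Γ) ∪ (ball x r \ Γ) := by
        intro Y hY
        by_cases h : Y ∈ Γ
        · exact Or.inl ⟨hY, h⟩
        · exact Or.inr ⟨hY, h⟩
      calc distWeightMeasure Γ γ (ball x r)
          ≤ ∫⁻ Y in (ball x r ∩ Γ) ∪ (ball x r \ Γ), ENNReal.ofReal (infDist Y Γ ^ (-γ)) :=
            lintegral_mono_set hsplit2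
        _ ≤ (∫⁻ Y in ball x r ∩ Γ, ENNReal.ofReal (infDist Y Γ ^ (-γ)))
            + ∫⁻ Y in ball x r \ Γ, ENNReal.ofReal (infDist Y Γ ^ (-γ)) :=
            lintegral_union_le _ _ _
        _ = ∫⁻ Y in ball x r \ Γ, ENNReal.ofReal (infDist Y Γ ^ (-γ)) := by
            rw [hzero, zero_add]
        _ ≤ ∫⁻ Y in ⋃ k, Ak k, ENNReal.ofReal (infDist Y Γ ^ (-γ)) := lintegral_mono_set hAcov
        _ ≤ ∑' k : ℕ, ∫⁻ Y in Ak k, ENNReal.ofReal (infDist Y Γ ^ (-γ)) :=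
            lintegral_iUnion_le _ _
        _ ≤ ∑' k : ℕ, ENNReal.ofReal (A * 2 ^ γ * r ^ ((n:ℝ) + 1 - γ)) * ENNReal.ofReal q ^ k :=
            ENNReal.tsum_le_tsum hAk
        _ = ENNReal.ofReal (A * 2 ^ γ * r ^ ((n:ℝ) + 1 - γ)) * (1 - ENNReal.ofReal q)⁻¹ := by
            rw [ENNReal.tsum_mul_left, ENNReal.tsum_geometric]
        _ ≤ ENNReal.ofReal (Cup * r ^ ((n : ℝ) + 1 - γ)) := by
            have h1 : (1:ℝ≥0∞) - ENNReal.ofReal q = ENNReal.ofReal (1 - q) := by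
              rw [ENNReal.ofReal_sub 1 hq0.le, ENNReal.ofReal_one]
            rw [h1, ← ENNReal.ofReal_inv_of_pos (by linarith : (0:ℝ) < 1 - q),
              ← ENNReal.ofReal_mul (by positivity)]
            apply ENNReal.ofReal_le_ofReal
            rw [hCup_def]
            nlinarith [mul_pos hωpos hrE]
  -- Step 5: two-sided bound on ρ
  have hρ : ∀ x ∈ Γ, ∀ r : ℝ, 0 < r → ENNReal.ofReal r < EMetric.diam Γ →
      ENNReal.ofReal (C⁻¹ * r ^ ((n : ℝ) - d - γ)) ≤ rhoRatio Γ d γ x r ∧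
        rhoRatio Γ d γ x r ≤ ENNReal.ofReal (C * r ^ ((n : ℝ) - d - γ)) := by
    intro x hx r hr hrD
    obtain ⟨hμl, hμu⟩ := hADR x hx r hr hrD
    have hml := hmlow x hx r hr hrD
    have hmu := hmup x hx r hr hrD
    have hrd1 : r ^ (d + 1) = r ^ d * r := by
      rw [Real.rpow_add hr, Real.rpow_one]
    have hden_low : ENNReal.ofReal (C₁⁻¹ * r ^ (d + 1))
        ≤ ENNReal.ofReal r * μH[d] (Γ ∩ ball x r) := by
      calc ENNReal.ofReal (C₁⁻¹ * r ^ (d + 1))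
          = ENNReal.ofReal r * ENNReal.ofReal (C₁⁻¹ * r ^ d) := by
            rw [← ENNReal.ofReal_mul hr.le]; congr 1; rw [hrd1]; ring
        _ ≤ _ := mul_le_mul_right hμl _
    have hden_up : ENNReal.ofReal r * μH[d] (Γ ∩ ball x r)
        ≤ ENNReal.ofReal (C₁ * r ^ (d + 1)) := by
      calc ENNReal.ofReal r * μH[d] (Γ ∩ ball x r)
          ≤ ENNReal.ofReal r * ENNReal.ofReal (C₁ * r ^ d) := mul_le_mul_right hμu _
        _ = ENNReal.ofReal (C₁ * r ^ (d + 1)) := by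
            rw [← ENNReal.ofReal_mul hr.le]; congr 1; rw [hrd1]; ring
    have hre : r ^ ((n : ℝ) + 1 - γ) / r ^ (d + 1) = r ^ ((n : ℝ) - d - γ) := by
      rw [← Real.rpow_sub hr]; congr 1; ring
    have h3 : 0 < r ^ ((n : ℝ) - d - γ) := Real.rpow_pos_of_pos hr _
    have hC₁pos : (0:ℝ) < C₁ := lt_of_lt_of_le one_pos hC₁
    constructor
    · have h1 : ENNReal.ofReal (clow * r ^ ((n : ℝ) + 1 - γ)) / ENNReal.ofReal (C₁ * r ^ (d + 1))
          ≤ rhoRatio Γ d γ x r := ENNReal.div_le_div hml hden_up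
      refine le_trans ?_ h1
      rw [← ENNReal.ofReal_div_of_pos (by positivity)]
      apply ENNReal.ofReal_le_ofReal
      have heq : clow * r ^ ((n : ℝ) + 1 - γ) / (C₁ * r ^ (d + 1))
          = (clow / C₁) * r ^ ((n : ℝ) - d - γ) := by
        rw [← hre]; field_simp
      rw [heq]
      have h4 : C₁ ≤ C * clow := (div_le_iff₀ hclowpos).1 hCb
      have h2 : C⁻¹ ≤ clow / C₁ := by
        rw [le_div_iff₀ hC₁pos]
        have hCC : C * C⁻¹ = 1 := mul_inv_cancel₀ hCpos.ne'
        have h5 := mul_le_mul_of_nonneg_left h4 (inv_nonneg.2 hCpos.le)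
        calc C⁻¹ * C₁ ≤ C⁻¹ * (C * clow) := h5
          _ = clow := by rw [← mul_assoc, inv_mul_cancel₀ hCpos.ne', one_mul]
      exact mul_le_mul_of_nonneg_right h2 h3.le
    · have h1 : rhoRatio Γ d γ x r ≤
          ENNReal.ofReal (Cup * r ^ ((n : ℝ) + 1 - γ)) / ENNReal.ofReal (C₁⁻¹ * r ^ (d + 1)) :=
        ENNReal.div_le_div hmu hden_low
      refine h1.trans ?_
      rw [← ENNReal.ofReal_div_of_pos (by positivity)]
      apply ENNReal.ofReal_le_ofReal
      have heq : Cup * r ^ ((n : ℝ) + 1 - γ) / (C₁⁻¹ * r ^ (d + 1))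
          = (Cup * C₁) * r ^ ((n : ℝ) - d - γ) := by
        rw [← hre]; field_simp
      rw [heq]
      exact mul_le_mul_of_nonneg_right (by rw [mul_comm]; exact hCa) h3.le
  refine ⟨hρ, by linarith, ?_⟩
  -- Step 6: the ratio estimate
  intro x hx r s hs hsr hrD
  have hr : 0 < r := hs.trans_le hsr
  have hsD : ENNReal.ofReal s < EMetric.diam Γ :=
    lt_of_le_of_lt (ENNReal.ofReal_le_ofReal hsr) hrD
  obtain ⟨-, h2⟩ := hρ x hx r hr hrD
  obtain ⟨h3, -⟩ := hρ x hx s hs hsD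
  have hkey := ENNReal.div_le_div h2 h3
  refine hkey.trans ?_
  have hCinv : (0:ℝ) < C⁻¹ * s ^ ((n : ℝ) - d - γ) := by positivity
  rw [← ENNReal.ofReal_div_of_pos hCinv]
  apply ENNReal.ofReal_le_ofReal
  have hexp : 1 - (1 + d + γ - (n : ℝ)) = (n : ℝ) - d - γ := by ring
  rw [hexp]
  rw [Real.div_rpow hr.le hs.le]
  have hsne : s ^ ((n : ℝ) - d - γ) ≠ 0 := (Real.rpow_pos_of_pos hs _).ne'
  have heq : C * r ^ ((n : ℝ) - d - γ) / (C⁻¹ * s ^ ((n : ℝ) - d - γ))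
      = C ^ 2 * (r ^ ((n : ℝ) - d - γ) / s ^ ((n : ℝ) - d - γ)) := by
    field_simp
  exact le_of_eq heq
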